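/- (Coefficient bound for Anderson–Thakur polynomials) Write H_{s−1} = Σ_{j=0}^{m} u_j t^j ∈ A[t] with u_m ≠ 0. Then each coefficient satisfies deg_θ u_j < sq/(q−1), i.e. (q−1)·deg_θ u_j < sq. -/

import Mathlib

open Polynomial

noncomputable section

variable (Fq : Type) [Field Fq] [Fintype Fq]

/-- `D_0 = 1` and `D_i = ∏_{j=0}^{i-1} (θ^{q^i} - θ^{q^j})` in `A = F_q[θ]`. -/
def carlitzD (i : ℕ) : Polynomial Fq :=
  ∏ j ∈ Finset.range i, ((X : Polynomial Fq) ^ (Fintype.card Fq) ^ i - X ^ (Fintype.card Fq) ^ j)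

/-- `L_0 = 1` and `L_i = ∏_{j=1}^{i} (θ - θ^{q^j})` in `A = F_q[θ]`. -/
def carlitzL (i : ℕ) : Polynomial Fq :=
  ∏ j ∈ Finset.Icc 1 i, ((X : Polynomial Fq) - X ^ (Fintype.card Fq) ^ j)

/-- The Carlitz factorial `Γ_m` (for `m ≥ 1`): writing `m - 1 = Σ n_i q^i` in base `q`,
`Γ_m = ∏ D_i^{n_i}`.  (The `i`-th base-`q` digit of `m - 1` is `(m-1)/q^i % q`.) -/
def carlitzΓ (m : ℕ) : Polynomial Fq :=
  ∏ i ∈ Finset.range m,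
    (carlitzD Fq i) ^ ((m - 1) / (Fintype.card Fq) ^ i % (Fintype.card Fq))

/-- The ambient polynomial ring `F_q[θ, t]`, with `θ = X 0` and `t = X 1`. -/
abbrev ATRing := MvPolynomial (Fin 2) Fq

/-- `θ` as an element of `F_q[θ, t]`. -/
def θS : ATRing Fq := MvPolynomial.X 0

/-- `t` as an element of `F_q[θ, t]`. -/
def tS : ATRing Fq := MvPolynomial.X 1

/-- `G_0(θ) = 1` and `G_n(θ) = ∏_{i=1}^{n} (t^{q^n} - θ^{q^i}) ∈ F_q[t, θ]`
(the polynomial `G_n(y)` evaluated at `y = θ`). -/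
def ATG (n : ℕ) : ATRing Fq :=
  ∏ i ∈ Finset.Icc 1 n, (tS Fq ^ (Fintype.card Fq) ^ n - θS Fq ^ (Fintype.card Fq) ^ i)

/-- Inclusion `F_q[θ] → F_q[θ, t]`. -/
def toSθ : Polynomial Fq →+* ATRing Fq :=
  Polynomial.eval₂RingHom MvPolynomial.C (θS Fq)

/-- The substitution `θ ↦ t`, `F_q[θ] → F_q[θ, t]` (used for `D_i|_{θ=t}` and
`Γ_{n+1}|_{θ=t}`). -/
def toSt : Polynomial Fq →+* ATRing Fq :=
  Polynomial.eval₂RingHom MvPolynomial.C (tS Fq)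

/-- Inclusion `A[t] = F_q[θ][t] → F_q[θ, t]`. -/
def toS₂ : Polynomial (Polynomial Fq) →+* ATRing Fq :=
  Polynomial.eval₂RingHom (toSθ Fq) (tS Fq)

/-- Inclusion of `F_q[θ, t]` into its fraction field. -/
def ιF : ATRing Fq →+* FractionRing (ATRing Fq) :=
  algebraMap (ATRing Fq) (FractionRing (ATRing Fq))

/-- `H : ℕ → A[t]` is the family of Anderson–Thakur polynomials iff it satisfies the
generating identity
`(1 - Σ_{i≥0} (G_i(θ)/D_i|_{θ=t}) x^{q^i}) ⁻¹ = Σ_{n≥0} (H_n/Γ_{n+1}|_{θ=t}) x^n`,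
i.e. the product of the two series is `1`, in the power series ring over the fraction
field of `F_q[θ, t]`. -/
def IsATFamily (H : ℕ → Polynomial (Polynomial Fq)) : Prop :=
  (1 - PowerSeries.mk fun N => ∑ i ∈ Finset.range (N + 1),
      if (Fintype.card Fq) ^ i = N then
        ιF Fq (ATG Fq i) / ιF Fq (toSt Fq (carlitzD Fq i)) else 0) *
    (PowerSeries.mk fun n =>
      ιF Fq (toS₂ Fq (H n)) / ιF Fq (toSt Fq (carlitzΓ Fq (n + 1)))) = 1

/-- For `H = Σ_j u_j t^j ∈ A[t]`, the twist-and-evaluate `H^{(i)}|_{t=θ} = Σ_j u_j^{q^i} θ^j ∈ A`,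
where `H^{(i)} := Σ_j u_j^{q^i} t^j`. -/
def twistEval (H : Polynomial (Polynomial Fq)) (i : ℕ) : Polynomial Fq :=
  ∑ j ∈ Finset.range (H.natDegree + 1), (H.coeff j) ^ (Fintype.card Fq) ^ i * X ^ j

/-! ### Auxiliary lemmas -/

lemma card_two_le : 2 ≤ Fintype.card Fq := Fintype.one_lt_card

lemma carlitzD_ne_zero (i : ℕ) : carlitzD Fq i ≠ 0 := by
  unfold carlitzD
  rw [Finset.prod_ne_zero_iff]
  intro j hj h
  rw [sub_eq_zero] at h
  have h2 : (2 : ℕ) ≤ Fintype.card Fq := card_two_le Fq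
  have hne : (Fintype.card Fq) ^ j < (Fintype.card Fq) ^ i :=
    Nat.pow_lt_pow_right h2 (Finset.mem_range.mp hj)
  have := congrArg natDegree h
  simp only [natDegree_X_pow] at this
  omega

lemma carlitzΓ_ne_zero (m : ℕ) : carlitzΓ Fq m ≠ 0 := by
  unfold carlitzΓ
  rw [Finset.prod_ne_zero_iff]
  exact fun i _ => pow_ne_zero _ (carlitzD_ne_zero Fq i)

lemma carlitzΓ_one : carlitzΓ Fq 1 = 1 := by
  simp [carlitzΓ]

/-- A retraction showing `toSt` is injective. -/
lemma toSt_injective : Function.Injective (toSt Fq) := by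
  intro p p' h
  have hret : ∀ r : Polynomial Fq,
      (MvPolynomial.eval₂Hom (Polynomial.C : Fq →+* Polynomial Fq)
        (fun i : Fin 2 => if i = 1 then X else 0)) (toSt Fq r) = r := by
    intro r
    show (MvPolynomial.eval₂Hom _ _ : ATRing Fq →+* Polynomial Fq) (r.eval₂ MvPolynomial.C (tS Fq)) = r
    rw [hom_eval₂]
    have h1 : (MvPolynomial.eval₂Hom (Polynomial.C : Fq →+* Polynomial Fq)
        (fun i : Fin 2 => if i = 1 then X else 0)).comp (MvPolynomial.C) =
        (Polynomial.C : Fq →+* Polynomial Fq) := by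
      ext a
      simp
    have h2 : (MvPolynomial.eval₂Hom (Polynomial.C : Fq →+* Polynomial Fq)
        (fun i : Fin 2 => if i = 1 then X else 0)) (tS Fq) = X := by
      simp [tS]
    rw [h1, h2, eval₂_C_X]
  rw [← hret p, ← hret p', h]

lemma toSt_ne_zero {p : Polynomial Fq} (hp : p ≠ 0) : toSt Fq p ≠ 0 := by
  intro h
  exact hp (toSt_injective Fq (by rw [h, map_zero]))

lemma ιF_injective : Function.Injective (ιF Fq) :=
  IsFractionRing.injective (ATRing Fq) (FractionRing (ATRing Fq))

lemma ιF_ne_zero {p : ATRing Fq} (hp : p ≠ 0) : ιF Fq p ≠ 0 := by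
  intro h
  exact hp (ιF_injective Fq (by rw [h, map_zero]))

/-- The key division-cancellation lemma in the fraction field. -/
lemma ιF_div_mul (p r : ATRing Fq) {d : ATRing Fq} (hd : d ≠ 0) :
    ιF Fq p / ιF Fq d * ιF Fq (d * r) = ιF Fq (p * r) := by
  have hd' : ιF Fq d ≠ 0 := ιF_ne_zero Fq hd
  rw [map_mul, map_mul]
  field_simp

/-- The swap-of-variables homomorphism `F_q[θ,t] → (F_q[t])[θ]`, sending `θ` to the
(outer) variable `X` and `t` to the constant `C X`. -/
def ψS : ATRing Fq →+* Polynomial (Polynomial Fq) :=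
  MvPolynomial.eval₂Hom ((Polynomial.C).comp (Polynomial.C))
    (fun i : Fin 2 => if i = 0 then X else Polynomial.C X)

/-- The swap-of-variables map on `F_q[θ][t]`, giving the polynomial in `θ` with
coefficients in `F_q[t]`. -/
def σS : Polynomial (Polynomial Fq) →+* Polynomial (Polynomial Fq) :=
  Polynomial.eval₂RingHom (Polynomial.mapRingHom (Polynomial.C : Fq →+* Polynomial Fq))
    (Polynomial.C X)

lemma ψS_θ : ψS Fq (θS Fq) = X := by simp [ψS, θS]

lemma ψS_t : ψS Fq (tS Fq) = Polynomial.C X := by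
  simp only [ψS, tS, MvPolynomial.eval₂Hom_X']
  norm_num

lemma ψS_toSt (p : Polynomial Fq) : ψS Fq (toSt Fq p) = Polynomial.C p := by
  show (ψS Fq) (p.eval₂ MvPolynomial.C (tS Fq)) = _
  rw [hom_eval₂]
  have h1 : (ψS Fq).comp (MvPolynomial.C) =
      ((Polynomial.C : Polynomial Fq →+* Polynomial (Polynomial Fq)).comp
        (Polynomial.C : Fq →+* Polynomial Fq)) := by
    ext a
    simp [ψS]
  rw [h1, ψS_t, ← hom_eval₂, eval₂_C_X]

lemma ψS_toSθ (u : Polynomial Fq) :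
    ψS Fq (toSθ Fq u) = u.map (Polynomial.C : Fq →+* Polynomial Fq) := by
  show (ψS Fq) (u.eval₂ MvPolynomial.C (θS Fq)) = _
  rw [hom_eval₂]
  have h1 : (ψS Fq).comp (MvPolynomial.C) =
      ((Polynomial.C : Polynomial Fq →+* Polynomial (Polynomial Fq)).comp
        (Polynomial.C : Fq →+* Polynomial Fq)) := by
    ext a
    simp [ψS]
  rw [h1, ψS_θ]
  rfl

lemma ψS_toS₂ (P : Polynomial (Polynomial Fq)) : ψS Fq (toS₂ Fq P) = σS Fq P := by
  show (ψS Fq) (P.eval₂ (toSθ Fq) (tS Fq)) = _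
  rw [hom_eval₂]
  have h1 : (ψS Fq).comp (toSθ Fq) =
      Polynomial.mapRingHom (Polynomial.C : Fq →+* Polynomial Fq) := by
    ext a
    · simp only [RingHom.comp_apply, coe_mapRingHom]
      rw [show (toSθ Fq) (Polynomial.C a) = MvPolynomial.C a by
        simp [toSθ, coe_eval₂RingHom]]
      simp [ψS]
    · simp only [RingHom.comp_apply, coe_mapRingHom, map_X]
      rw [show (toSθ Fq) X = θS Fq by simp [toSθ, coe_eval₂RingHom], ψS_θ]
  rw [h1, ψS_t]
  rfl

lemma σS_coeff (P : Polynomial (Polynomial Fq)) (k j : ℕ) :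
    ((σS Fq P).coeff k).coeff j = (P.coeff j).coeff k := by
  induction P using Polynomial.induction_on' with
  | add p q hp hq => simp [map_add, hp, hq]
  | monomial n a =>
    simp only [σS, coe_eval₂RingHom, eval₂_monomial, coe_mapRingHom]
    rw [← Polynomial.C_pow, Polynomial.coeff_mul_C, Polynomial.coeff_map,
      Polynomial.coeff_C_mul, Polynomial.coeff_X_pow, Polynomial.coeff_monomial]
    split_ifs <;> simp_all

lemma coeff_natDegree_le_σS (P : Polynomial (Polynomial Fq)) (j : ℕ) :
    ((P.coeff j)).natDegree ≤ (σS Fq P).natDegree := by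
  by_cases h : P.coeff j = 0
  · simp [h]
  · apply le_natDegree_of_ne_zero
    intro h0
    have hc := σS_coeff Fq P (P.coeff j).natDegree j
    rw [h0] at hc
    simp only [coeff_zero] at hc
    exact h (leadingCoeff_eq_zero.mp hc.symm)

lemma ψS_ATG (i : ℕ) :
    ψS Fq (ATG Fq i) = ∏ m ∈ Finset.Icc 1 i,
      -((X : Polynomial (Polynomial Fq)) ^ (Fintype.card Fq) ^ m
        - Polynomial.C ((X : Polynomial Fq) ^ (Fintype.card Fq) ^ i)) := by
  unfold ATG
  rw [map_prod]
  refine Finset.prod_congr rfl fun m _ => ?_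
  rw [map_sub, map_pow, map_pow, ψS_t, ψS_θ, ← Polynomial.C_pow]
  ring

lemma ψS_ATG_natDegree (i : ℕ) :
    (ψS Fq (ATG Fq i)).natDegree = ∑ m ∈ Finset.Icc 1 i, (Fintype.card Fq) ^ m := by
  have hq : 2 ≤ Fintype.card Fq := card_two_le Fq
  rw [ψS_ATG]
  rw [natDegree_prod]
  · refine Finset.sum_congr rfl fun m hm => ?_
    rw [natDegree_neg, natDegree_X_pow_sub_C]
  · intro m hm
    have hpos : 0 < (Fintype.card Fq) ^ m := Nat.pow_pos (by omega)
    exact neg_ne_zero.mpr (X_pow_sub_C_ne_zero hpos _)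

lemma geom_sum_q (i : ℕ) :
    (Fintype.card Fq - 1) * (∑ m ∈ Finset.Icc 1 i, (Fintype.card Fq) ^ m) + Fintype.card Fq
      = (Fintype.card Fq) ^ (i + 1) := by
  have hq : 2 ≤ Fintype.card Fq := card_two_le Fq
  induction i with
  | zero => simp
  | succ i ih =>
    rw [Finset.sum_Icc_succ_top (Nat.le_add_left 1 i), Nat.mul_add]
    have h1 : Fintype.card Fq - 1 + 1 = Fintype.card Fq := by omega
    calc (Fintype.card Fq - 1) * (∑ m ∈ Finset.Icc 1 i, (Fintype.card Fq) ^ m)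
          + (Fintype.card Fq - 1) * (Fintype.card Fq) ^ (i + 1) + Fintype.card Fq
        = ((Fintype.card Fq - 1) * (∑ m ∈ Finset.Icc 1 i, (Fintype.card Fq) ^ m)
            + Fintype.card Fq) + (Fintype.card Fq - 1) * (Fintype.card Fq) ^ (i + 1) := by ring
      _ = (Fintype.card Fq) ^ (i + 1)
            + (Fintype.card Fq - 1) * (Fintype.card Fq) ^ (i + 1) := by rw [ih]
      _ = (Fintype.card Fq - 1 + 1) * (Fintype.card Fq) ^ (i + 1) := by ring
      _ = (Fintype.card Fq) ^ (i + 1 + 1) := by rw [h1]; ring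

/-- The constant term of the generating identity: `H_0 = 1`. -/
lemma H_zero (H : ℕ → Polynomial (Polynomial Fq)) (hH : IsATFamily Fq H) :
    toS₂ Fq (H 0) = 1 := by
  unfold IsATFamily at hH
  have h0 := congrArg (PowerSeries.constantCoeff (R := FractionRing (ATRing Fq))) hH
  rw [map_mul, map_sub, map_one] at h0
  rw [← PowerSeries.coeff_zero_eq_constantCoeff_apply, PowerSeries.coeff_mk,
    ← PowerSeries.coeff_zero_eq_constantCoeff_apply, PowerSeries.coeff_mk] at h0
  have hA0 : (∑ i ∈ Finset.range (0 + 1),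
      if (Fintype.card Fq) ^ i = 0 then
        ιF Fq (ATG Fq i) / ιF Fq (toSt Fq (carlitzD Fq i)) else 0) = 0 := by
    simp
  rw [hA0, sub_zero, one_mul, carlitzΓ_one, map_one, map_one, div_one] at h0
  exact ιF_injective Fq (by rw [h0, map_one])

/-- The recursion for `H_N` obtained by extracting the `N`-th coefficient of the
generating identity. -/
lemma recN (H : ℕ → Polynomial (Polynomial Fq)) (hH : IsATFamily Fq H) (N : ℕ)
    (hN : N ≠ 0) :
    ιF Fq (toS₂ Fq (H N)) / ιF Fq (toSt Fq (carlitzΓ Fq (N + 1)))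
      = ∑ k ∈ Finset.range (N + 1),
          (∑ i ∈ Finset.range (k + 1),
            if (Fintype.card Fq) ^ i = k then
              ιF Fq (ATG Fq i) / ιF Fq (toSt Fq (carlitzD Fq i)) else 0)
            * (ιF Fq (toS₂ Fq (H (N - k))) / ιF Fq (toSt Fq (carlitzΓ Fq (N - k + 1)))) := by
  unfold IsATFamily at hH
  rw [sub_mul, one_mul, sub_eq_iff_eq_add] at hH
  have h0 := congrArg (PowerSeries.coeff (R := FractionRing (ATRing Fq)) N) hH
  rw [map_add, PowerSeries.coeff_one, if_neg hN, PowerSeries.coeff_mk,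
    PowerSeries.coeff_mul, Finset.Nat.sum_antidiagonal_eq_sum_range_succ_mk] at h0
  simp only [PowerSeries.coeff_mk] at h0
  rw [h0, zero_add]

/-- The polynomial recursion for `H_N`, with all denominators cleared.  The factors
`w` and `v k i` come from `F_q[t]` and hence are `θ`-free. -/
lemma poly_rec (H : ℕ → Polynomial (Polynomial Fq)) (hH : IsATFamily Fq H) (N : ℕ)
    (hN : N ≠ 0) :
    ∃ (w : Polynomial Fq) (v : ℕ → ℕ → Polynomial Fq), w ≠ 0 ∧
      toS₂ Fq (H N) * toSt Fq w
        = ∑ k ∈ Finset.range (N + 1), ∑ i ∈ Finset.range (k + 1),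
            if (Fintype.card Fq) ^ i = k
            then ATG Fq i * toS₂ Fq (H (N - k)) * toSt Fq (v k i) else 0 := by
  classical
  set f : ℕ → Polynomial Fq := fun k =>
    ∏ i ∈ Finset.range (k + 1), (carlitzD Fq i * carlitzΓ Fq (N - k + 1)) with hf
  set w : Polynomial Fq := ∏ k ∈ Finset.range (N + 1), f k with hwdef
  set v : ℕ → ℕ → Polynomial Fq := fun k i =>
    carlitzΓ Fq (N + 1) * (∏ k' ∈ (Finset.range (N + 1)).erase k, f k') *
      ∏ i' ∈ (Finset.range (k + 1)).erase i,
        (carlitzD Fq i' * carlitzΓ Fq (N - k + 1)) with hvdef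
  have hwne : w ≠ 0 := by
    rw [hwdef]
    refine Finset.prod_ne_zero_iff.mpr fun k _ => ?_
    rw [hf]
    exact Finset.prod_ne_zero_iff.mpr fun i _ =>
      mul_ne_zero (carlitzD_ne_zero Fq i) (carlitzΓ_ne_zero Fq _)
  refine ⟨w, v, hwne, ?_⟩
  have hM : ∀ k ∈ Finset.range (N + 1), ∀ i ∈ Finset.range (k + 1),
      carlitzΓ Fq (N + 1) * w
        = (carlitzD Fq i * carlitzΓ Fq (N - k + 1)) * v k i := by
    intro k hk i hi
    have e1 : w = f k * ∏ k' ∈ (Finset.range (N + 1)).erase k, f k' :=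
      (Finset.mul_prod_erase _ f hk).symm
    have e2 : f k = (carlitzD Fq i * carlitzΓ Fq (N - k + 1)) *
        ∏ i' ∈ (Finset.range (k + 1)).erase i,
          (carlitzD Fq i' * carlitzΓ Fq (N - k + 1)) := by
      rw [hf]
      exact (Finset.mul_prod_erase _ _ hi).symm
    rw [e1, e2, hvdef]
    ring
  apply ιF_injective Fq
  have key := recN Fq H hH N hN
  calc ιF Fq (toS₂ Fq (H N) * toSt Fq w)
      = (ιF Fq (toS₂ Fq (H N)) / ιF Fq (toSt Fq (carlitzΓ Fq (N + 1))))
          * ιF Fq (toSt Fq (carlitzΓ Fq (N + 1) * w)) := by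
        rw [map_mul (toSt Fq)]
        exact (ιF_div_mul Fq _ _ (toSt_ne_zero Fq (carlitzΓ_ne_zero Fq _))).symm
    _ = (∑ k ∈ Finset.range (N + 1),
          (∑ i ∈ Finset.range (k + 1),
            if (Fintype.card Fq) ^ i = k then
              ιF Fq (ATG Fq i) / ιF Fq (toSt Fq (carlitzD Fq i)) else 0)
            * (ιF Fq (toS₂ Fq (H (N - k))) / ιF Fq (toSt Fq (carlitzΓ Fq (N - k + 1)))))
          * ιF Fq (toSt Fq (carlitzΓ Fq (N + 1) * w)) := by rw [key]
    _ = ∑ k ∈ Finset.range (N + 1), ∑ i ∈ Finset.range (k + 1),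
          (if (Fintype.card Fq) ^ i = k
            then ιF Fq (ATG Fq i * toS₂ Fq (H (N - k)) * toSt Fq (v k i)) else 0) := by
        rw [Finset.sum_mul]
        refine Finset.sum_congr rfl fun k hk => ?_
        rw [Finset.sum_mul, Finset.sum_mul]
        refine Finset.sum_congr rfl fun i hi => ?_
        split_ifs with hc
        · rw [div_mul_div_comm, ← map_mul, ← map_mul, ← map_mul (toSt Fq), hM k hk i hi,
            map_mul (toSt Fq) (carlitzD Fq i * carlitzΓ Fq (N - k + 1)) (v k i)]
          exact ιF_div_mul Fq _ _
            (toSt_ne_zero Fq (mul_ne_zero (carlitzD_ne_zero Fq i) (carlitzΓ_ne_zero Fq _)))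
        · rw [zero_mul, zero_mul]
    _ = ιF Fq (∑ k ∈ Finset.range (N + 1), ∑ i ∈ Finset.range (k + 1),
          if (Fintype.card Fq) ^ i = k
          then ATG Fq i * toS₂ Fq (H (N - k)) * toSt Fq (v k i) else 0) := by
        rw [map_sum]
        refine Finset.sum_congr rfl fun k hk => ?_
        rw [map_sum]
        refine Finset.sum_congr rfl fun i hi => ?_
        rw [apply_ite (ιF Fq), map_zero]

/-- The degree bound for the Anderson–Thakur polynomials, via strong induction. -/
lemma deg_bound (H : ℕ → Polynomial (Polynomial Fq)) (hH : IsATFamily Fq H) (N : ℕ) :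
    (Fintype.card Fq - 1) * (σS Fq (H N)).natDegree + 1 ≤ (N + 1) * Fintype.card Fq := by
  have hq : 2 ≤ Fintype.card Fq := card_two_le Fq
  induction N using Nat.strong_induction_on with
  | _ N ih =>
    rcases Nat.eq_zero_or_pos N with h0 | hNpos
    · subst h0
      have h1 : σS Fq (H 0) = 1 := by
        rw [← ψS_toS₂, H_zero Fq H hH, map_one]
      rw [h1, natDegree_one, Nat.mul_zero]
      omega
    · obtain ⟨w, v, hw, hid⟩ := poly_rec Fq H hH N (by omega)
      set T := ((N + 1) * Fintype.card Fq - 1) / (Fintype.card Fq - 1) with hT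
      have hTle : ∀ d : ℕ, (Fintype.card Fq - 1) * d + 1 ≤ (N + 1) * Fintype.card Fq →
          d ≤ T := by
        intro d hd
        rw [hT]
        rw [Nat.le_div_iff_mul_le (by omega)]
        rw [mul_comm]
        omega
      have hdeg : (σS Fq (H N)).natDegree ≤ T := by
        have e1 : (σS Fq (H N)).natDegree = (σS Fq (H N) * Polynomial.C w).natDegree :=
          (natDegree_mul_C hw).symm
        have e2 : σS Fq (H N) * Polynomial.C w
            = ∑ k ∈ Finset.range (N + 1), ∑ i ∈ Finset.range (k + 1),
                if (Fintype.card Fq) ^ i = k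
                then ψS Fq (ATG Fq i) * σS Fq (H (N - k)) * Polynomial.C (v k i) else 0 := by
          have := congrArg (ψS Fq) hid
          rw [map_mul, ψS_toS₂, ψS_toSt] at this
          rw [this, map_sum]
          refine Finset.sum_congr rfl fun k hk => ?_
          rw [map_sum]
          refine Finset.sum_congr rfl fun i hi => ?_
          rw [apply_ite (ψS Fq), map_zero, map_mul, map_mul, ψS_toS₂, ψS_toSt]
        rw [e1, e2]
        refine natDegree_sum_le_of_forall_le _ _ fun k hk => ?_
        refine natDegree_sum_le_of_forall_le _ _ fun i hi => ?_
        split_ifs with hc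
        · -- the term `ψS (ATG i) * σS (H (N-k)) * C (v k i)`
          have hk1 : 1 ≤ k := by
            rw [← hc]
            exact Nat.one_le_pow _ _ (by omega)
          have hkN : k ≤ N := by
            have := Finset.mem_range.mp hk
            omega
          have ihk := ih (N - k) (by omega)
          apply hTle
          have hmul : (ψS Fq (ATG Fq i) * σS Fq (H (N - k)) * Polynomial.C (v k i)).natDegree
              ≤ (∑ m ∈ Finset.Icc 1 i, (Fintype.card Fq) ^ m)
                + (σS Fq (H (N - k))).natDegree := by
            calc (ψS Fq (ATG Fq i) * σS Fq (H (N - k)) * Polynomial.C (v k i)).natDegree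
                ≤ (ψS Fq (ATG Fq i) * σS Fq (H (N - k))).natDegree :=
                  natDegree_mul_C_le _ _
              _ ≤ (ψS Fq (ATG Fq i)).natDegree + (σS Fq (H (N - k))).natDegree :=
                  natDegree_mul_le
              _ = _ := by rw [ψS_ATG_natDegree]
          have hgeom := geom_sum_q Fq i
          -- arithmetic
          have e3 : (Fintype.card Fq) ^ (i + 1) = k * Fintype.card Fq := by
            rw [pow_succ, hc]
          have e4 : (N - k + 1) * Fintype.card Fq + k * Fintype.card Fq
              = (N + 1) * Fintype.card Fq := by
            rw [← add_mul]
            congr 1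
            omega
          set A := (Fintype.card Fq - 1) * (∑ m ∈ Finset.Icc 1 i, (Fintype.card Fq) ^ m)
            with hA
          set B := (Fintype.card Fq - 1) * (σS Fq (H (N - k))).natDegree with hB
          calc (Fintype.card Fq - 1) *
                (ψS Fq (ATG Fq i) * σS Fq (H (N - k)) * Polynomial.C (v k i)).natDegree + 1
              ≤ (Fintype.card Fq - 1) *
                ((∑ m ∈ Finset.Icc 1 i, (Fintype.card Fq) ^ m)
                  + (σS Fq (H (N - k))).natDegree) + 1 := by
                have := Nat.mul_le_mul_left (Fintype.card Fq - 1) hmul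
                omega
            _ = A + B + 1 := by rw [Nat.mul_add]
            _ ≤ (N + 1) * Fintype.card Fq := by
                rw [e3] at hgeom
                omega
        · simp only [natDegree_zero]
          exact Nat.zero_le T
      have hT2 : (Fintype.card Fq - 1) * T ≤ (N + 1) * Fintype.card Fq - 1 := by
        rw [hT, mul_comm]
        exact Nat.div_mul_le_self _ _
      have := Nat.mul_le_mul_left (Fintype.card Fq - 1) hdeg
      have hpos : 1 ≤ (N + 1) * Fintype.card Fq := Nat.one_le_iff_ne_zero.mpr (by positivity)
      omega

/-- coefficient bound for Anderson–Thakur polynomials. Writing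
`H_{s-1} = Σ_j u_j t^j ∈ A[t]`, each coefficient satisfies `deg_θ u_j < sq/(q-1)`,
i.e. `(q - 1) · deg_θ u_j < s·q`. -/
theorem anderson_thakur_coeff_bound
    (H : ℕ → Polynomial (Polynomial Fq)) (hH : IsATFamily Fq H)
    (s : ℕ) (hs : 0 < s) (j : ℕ) :
    (Fintype.card Fq - 1) * ((H (s - 1)).coeff j).natDegree < s * Fintype.card Fq := by
  have hb := deg_bound Fq H hH (s - 1)
  have hc := coeff_natDegree_le_σS Fq (H (s - 1)) j
  have hs1 : s - 1 + 1 = s := by omega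
  rw [hs1] at hb
  calc (Fintype.card Fq - 1) * ((H (s - 1)).coeff j).natDegree
      ≤ (Fintype.card Fq - 1) * (σS Fq (H (s - 1))).natDegree :=
        Nat.mul_le_mul_left _ hc
    _ < s * Fintype.card Fq := by omega
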